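/- At a transition slot the battery is empty: Suppose λ₁,...,λ_K ≥ 0, ν_k = (ln 2 Σ_{i=k}^K λᵢ)^{-1}, and the complementary slackness conditions λ_k (Σ_{i=1}^k Tᵢ − B₁ − Σ_{i=1}^{k-1} Hᵢ) = 0 hold for all k. If ν_t ≠ ν_{t+1} for some t < K, then Σ_{i=1}^t Tᵢ = B₁ + Σ_{i=1}^{t-1} Hᵢ. -/

import Mathlib

theorem battery_empty_at_transition (K : ℕ) (lam T H : ℕ → ℝ) (B₁ : ℝ)
    (hlam : ∀ k ∈ Finset.Icc 1 K, 0 ≤ lam k)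
    (hCS : ∀ k ∈ Finset.Icc 1 K,
      lam k * ((∑ i ∈ Finset.Icc 1 k, T i) - B₁ - ∑ i ∈ Finset.Icc 1 (k - 1), H i) = 0)
    (t : ℕ) (ht1 : 1 ≤ t) (htK : t < K)
    (hν : (Real.log 2 * ∑ i ∈ Finset.Icc t K, lam i)⁻¹ ≠
          (Real.log 2 * ∑ i ∈ Finset.Icc (t + 1) K, lam i)⁻¹) :
    ∑ i ∈ Finset.Icc 1 t, T i = B₁ + ∑ i ∈ Finset.Icc 1 (t - 1), H i := by
  have hsplit : Finset.Icc t K = insert t (Finset.Icc (t + 1) K) := by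
    ext x; simp [Finset.mem_Icc]; omega
  have hlt : lam t ≠ 0 := by
    intro h0
    apply hν
    rw [hsplit, Finset.sum_insert (by simp), h0, zero_add]
  have ht : t ∈ Finset.Icc 1 K := Finset.mem_Icc.mpr ⟨ht1, htK.le⟩
  have := hCS t ht
  rcases mul_eq_zero.mp this with h | h
  · exact absurd h hlt
  · linarith
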